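/- Let A be a real n×n matrix whose symmetric part ½(A + Aᵀ) is positive definite, and let P be a real skew-symmetric n×n matrix (Pᵀ = −P). Then det(I − A·P) > 0. (This is the key positivity fact making the dilaton formula φ = −½ ln det(1 − E₀Π) − ½ ln ν well defined.) -/

import Mathlib

open Matrix

private lemma aux_det_ne_zero (n : ℕ) (A Q : Matrix (Fin n) (Fin n) ℝ)
    (hA : (((1 : ℝ) / 2) • (A + Aᵀ)).PosDef) (hQ : Qᵀ = -Q) :
    (1 - A * Q).det ≠ 0 := by
  intro hdet
  obtain ⟨v, hv, hv0⟩ := (Matrix.exists_mulVec_eq_zero_iff).2 hdet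
  set y : Fin n → ℝ := Q *ᵥ v with hy
  have hvAy : v = A *ᵥ y := by
    have := hv0
    rw [sub_mulVec, one_mulVec, sub_eq_zero] at this
    rw [this, ← Matrix.mulVec_mulVec]
  have hyne : y ≠ 0 := by
    intro h
    apply hv
    rw [hvAy, h, Matrix.mulVec_zero]
  have hpos := hA.dotProduct_mulVec_pos hyne
  -- compute the quadratic form
  have hform : star y ⬝ᵥ ((((1 : ℝ) / 2) • (A + Aᵀ)) *ᵥ y) = y ⬝ᵥ (A *ᵥ y) := by
    have hstar : star y = y := rfl
    rw [hstar, Matrix.smul_mulVec, Matrix.add_mulVec, dotProduct_smul,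
      dotProduct_add]
    have h1 : y ⬝ᵥ (Aᵀ *ᵥ y) = y ⬝ᵥ (A *ᵥ y) := by
      rw [Matrix.dotProduct_mulVec, ← Matrix.mulVec_transpose, transpose_transpose,
        dotProduct_comm]
    rw [h1, smul_eq_mul]
    ring
  have hzero : y ⬝ᵥ (A *ᵥ y) = 0 := by
    have h1 : y ⬝ᵥ (A *ᵥ y) = y ⬝ᵥ v := by rw [hvAy]
    have h2 : v ⬝ᵥ y = -(y ⬝ᵥ v) := by
      rw [hy, Matrix.dotProduct_mulVec, ← Matrix.mulVec_transpose, hQ,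
        Matrix.neg_mulVec, neg_dotProduct]
    have h3 : y ⬝ᵥ v = v ⬝ᵥ y := dotProduct_comm _ _
    rw [h1]
    linarith [h2, h3]
  rw [hform, hzero] at hpos
  simp at hpos

/-- If the symmetric part of a real matrix `A` is positive definite and `P` is
skew-symmetric, then `det (I − A·P) > 0`.  (This is the key positivity fact
making the dilaton formula `φ = −½ ln det(1 − E₀Π) − ½ ln ν` well defined.) -/
theorem stmt6 (n : ℕ) (A P : Matrix (Fin n) (Fin n) ℝ)
    (hA : (((1 : ℝ) / 2) • (A + Aᵀ)).PosDef) (hP : Pᵀ = -P) :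
    0 < (1 - A * P).det := by
  set f : ℝ → ℝ := fun t => (1 - A * (t • P)).det with hf
  have hcont : Continuous f := by
    apply Continuous.matrix_det
    exact continuous_const.sub (continuous_const.matrix_mul
      (continuous_id.smul continuous_const))
  have hne : ∀ t : ℝ, f t ≠ 0 := by
    intro t
    apply aux_det_ne_zero n A (t • P) hA
    rw [Matrix.transpose_smul, hP, smul_neg]
  have hf0 : f 0 = 1 := by simp [hf]
  have hf1 : f 1 = (1 - A * P).det := by simp [hf]
  rw [← hf1]
  by_contra hle
  push_neg at hle
  have hlt : f 1 < 0 := lt_of_le_of_ne hle (hne 1)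
  have : (0 : ℝ) ∈ Set.Icc (f 1) (f 0) := ⟨le_of_lt hlt, by rw [hf0]; norm_num⟩
  obtain ⟨t, _, ht⟩ := intermediate_value_Icc' (by norm_num : (0:ℝ) ≤ 1)
    hcont.continuousOn this
  exact hne t ht
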